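/- (Asymptotic-preserving property: the formal ε → 0 limit scheme is the LDG scheme for the heat equation.) Let λ > 0, Δt > 0, let ρⁿ, g* ∈ V_h^k, and let r^{n+1} : Ω_x × ℝ → ℝ be of the form r^{n+1}(x,v) = M(v) Σ_{ℓ=0}^{N_v} c_ℓ(x) v^ℓ with c_ℓ ∈ V_h^k. Define r*(x,v) = ρⁿ(x)M(v) and j*(x,v) = −(vM(v)/λ) g*(x). Assume: (i) for every v ∈ ℝ and every η ∈ V_h^k, (j*(·,v), η) = −(v/λ) L⁺(r*(·,v), η); and (ii) for every v ∈ ℝ and every ξ ∈ V_h^k, ((r^{n+1}(·,v) − r*(·,v))/Δt, ξ) + v·L⁻(j*(·,v), ξ) = 0. Set ρ^{n+1}(x) = ∫_ℝ r^{n+1}(x,v) dv. Then ρ^{n+1} ∈ V_h^k and the pair (g*, ρ^{n+1}) satisfies the LDG scheme for the heat equation ∂_t ρ = D ∂_{xx} ρ with D = ∫_ℝ (v²M(v)/λ) dv = 1/λ; that is, for every η ∈ V_h^k, (g*, η) = L⁺(ρⁿ, η), and for every ξ ∈ V_h^k, ((ρ^{n+1} − ρⁿ)/Δt, ξ) = D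 · L⁻(g*, ξ). -/

import Mathlib

noncomputable section

open Polynomial MeasureTheory

namespace APDG

/-- Mesh size `h = 1/N` of the uniform partition of `Ω_x = [0,1]` into `N` cells. -/
def msize (N : ℕ) : ℝ := 1 / N

/-- A piecewise-polynomial function on the uniform mesh of `[0,1]` with `N` cells, recorded
by its polynomial on each cell `I_i = [i·h, (i+1)·h]` (indexed by `i : Fin N`). -/
abbrev PW (N : ℕ) := Fin N → Polynomial ℝ

/-- Membership in `V_h^k`: on each cell the polynomial has degree at most `k`. -/
def degLE (k : ℕ) {N : ℕ} (u : PW N) : Prop := ∀ i, (u i).degree ≤ (k : ℕ)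

/-- The one-sided limit `u⁺_{i-1/2}` from cell `I_i` at the interface `x_{i-1/2} = i·h`. -/
def uplus {N : ℕ} (u : PW N) (i : Fin N) : ℝ := (u i).eval ((i.val : ℝ) * msize N)

/-- The index `i - 1` modulo `N` (periodic boundary conditions). -/
def prevIdx {N : ℕ} (i : Fin N) : Fin N := ⟨(i.val + (N - 1)) % N, Nat.mod_lt _ i.pos⟩

/-- The one-sided limit `u⁻_{i-1/2}` from cell `I_{i-1}` at the interface `x_{i-1/2}`,
with periodic identification of cell indices modulo `N` (so for `i = 0` it is the value of
the polynomial of the last cell at the right endpoint `1`). -/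
def uminus {N : ℕ} (u : PW N) (i : Fin N) : ℝ :=
  (u (prevIdx i)).eval ((((prevIdx i).val : ℝ) + 1) * msize N)

/-- The jump `[u]_{i-1/2} = u⁺_{i-1/2} − u⁻_{i-1/2}`. -/
def jump {N : ℕ} (u : PW N) (i : Fin N) : ℝ := uplus u i - uminus u i

/-- The `L²(Ω_x)` inner product `(u,w) = ∫_{Ω_x} u w dx`, computed cell by cell. -/
def inner2 {N : ℕ} (u w : PW N) : ℝ :=
  ∑ i : Fin N,
    ∫ x in ((i.val : ℝ) * msize N)..(((i.val : ℝ) + 1) * msize N), (u i).eval x * (w i).eval x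

/-- `L⁺(ψ,u) = −∫_{Ω_x} ψ ∂ₓu dx − Σ_i ψ⁺_{i-1/2}[u]_{i-1/2}`. -/
def Lplus {N : ℕ} (ψ u : PW N) : ℝ :=
  - inner2 ψ (fun i => derivative (u i)) - ∑ i : Fin N, uplus ψ i * jump u i

/-- `L⁻(ψ,u) = −∫_{Ω_x} ψ ∂ₓu dx − Σ_i ψ⁻_{i-1/2}[u]_{i-1/2}`. -/
def Lminus {N : ℕ} (ψ u : PW N) : ℝ :=
  - inner2 ψ (fun i => derivative (u i)) - ∑ i : Fin N, uminus ψ i * jump u i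

/-- The one-dimensional normalized Maxwellian `M(v) = (2π)^{-1/2} exp(-v²/2)`. -/
def Mw (v : ℝ) : ℝ := (Real.sqrt (2 * Real.pi))⁻¹ * Real.exp (-(v ^ 2) / 2)

/-- The coefficient data of a function of *discrete ansatz form*
`f(x,v) = M(v) Σ_{ℓ=0}^{N_v} c_ℓ(x) v^ℓ`, with each `c_ℓ` piecewise polynomial. -/
abbrev Ansatz (N Nv : ℕ) := Fin (Nv + 1) → PW N

/-- All coefficients of the ansatz belong to `V_h^k`. -/
def AdegLE (k : ℕ) {N Nv : ℕ} (c : Ansatz N Nv) : Prop := ∀ ℓ, degLE k (c ℓ)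

/-- For fixed velocity `v`, the element `f(·,v) ∈ V_h^k` of an ansatz-form function:
on cell `i` it is the polynomial `M(v) Σ_ℓ v^ℓ c_ℓ`. -/
def aAt {N Nv : ℕ} (c : Ansatz N Nv) (v : ℝ) : PW N :=
  fun i => Polynomial.C (Mw v) * ∑ ℓ : Fin (Nv + 1), Polynomial.C (v ^ (ℓ : ℕ)) * c ℓ i

/-- The squared weighted phase-space norm
`|||f|||² = ∫_{Ω_x} ∫_ℝ f(x,v)² (λ/M(v)) dv dx` of an ansatz-form function. -/
def nrmSq {N Nv : ℕ} (lam : ℝ) (c : Ansatz N Nv) : ℝ :=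
  ∑ i : Fin N,
    ∫ x in ((i.val : ℝ) * msize N)..(((i.val : ℝ) + 1) * msize N),
      ∫ v : ℝ, ((aAt c v i).eval x) ^ 2 * (lam / Mw v)

-- basic integrability
lemma polyII (p q : ℝ[X]) (a b : ℝ) :
    IntervalIntegrable (fun x => p.eval x * q.eval x) volume a b :=
  (p.continuous.mul q.continuous).intervalIntegrable _ _

lemma inner2_smul {N : ℕ} (a : ℝ) (u w : PW N) :
    inner2 (fun i => Polynomial.C a * u i) w = a * inner2 u w := by
  simp only [inner2, eval_mul, eval_C, mul_assoc, intervalIntegral.integral_const_mul,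
    Finset.mul_sum]

lemma inner2_sub {N : ℕ} (u v w : PW N) :
    inner2 (fun i => u i - v i) w = inner2 u w - inner2 v w := by
  unfold inner2
  rw [← Finset.sum_sub_distrib]
  refine Finset.sum_congr rfl fun i _ => ?_
  rw [← intervalIntegral.integral_sub (polyII _ _ _ _) (polyII _ _ _ _)]
  refine intervalIntegral.integral_congr fun x _ => ?_
  simp [sub_mul]

lemma inner2_sum {N : ℕ} {ι : Type*} (s : Finset ι) (f : ι → PW N) (w : PW N) :
    inner2 (fun i => ∑ j ∈ s, f j i) w = ∑ j ∈ s, inner2 (f j) w := by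
  unfold inner2
  have h : ∀ i : Fin N,
      (∫ x in ((i.val : ℝ) * msize N)..(((i.val : ℝ) + 1) * msize N),
        (∑ j ∈ s, f j i).eval x * (w i).eval x)
      = ∑ j ∈ s, ∫ x in ((i.val : ℝ) * msize N)..(((i.val : ℝ) + 1) * msize N),
          (f j i).eval x * (w i).eval x := by
    intro i
    rw [← intervalIntegral.integral_finset_sum (fun j _ => polyII (f j i) (w i) _ _)]
    refine intervalIntegral.integral_congr fun x _ => ?_
    simp [eval_finset_sum, Finset.sum_mul]
  simp_rw [h]
  exact Finset.sum_comm

lemma Lminus_smul {N : ℕ} (a : ℝ) (ψ ξ : PW N) :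
    Lminus (fun i => Polynomial.C a * ψ i) ξ = a * Lminus ψ ξ := by
  unfold Lminus
  rw [inner2_smul]
  simp only [uminus, eval_mul, eval_C, mul_assoc, ← Finset.mul_sum]
  ring

lemma Lplus_smul {N : ℕ} (a : ℝ) (ψ ξ : PW N) :
    Lplus (fun i => Polynomial.C a * ψ i) ξ = a * Lplus ψ ξ := by
  unfold Lplus
  rw [inner2_smul]
  simp only [uplus, eval_mul, eval_C, mul_assoc, ← Finset.mul_sum]
  ring

lemma inner2_aAt {N Nv : ℕ} (c : Ansatz N Nv) (v : ℝ) (ξ : PW N) :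
    inner2 (aAt c v) ξ = Mw v * ∑ ℓ : Fin (Nv + 1), v ^ (ℓ : ℕ) * inner2 (c ℓ) ξ := by
  unfold aAt
  rw [inner2_smul]
  congr 1
  trans (∑ ℓ : Fin (Nv + 1), inner2 (fun i => Polynomial.C (v ^ (ℓ : ℕ)) * c ℓ i) ξ)
  · exact inner2_sum _ _ _
  · exact Finset.sum_congr rfl fun ℓ _ => inner2_smul _ _ _

-- Gaussian facts
lemma Mw_pos (v : ℝ) : 0 < Mw v := by
  unfold Mw
  have h2π : (0:ℝ) < 2 * Real.pi := by positivity
  positivity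

lemma exp_eq (x : ℝ) : Real.exp (-(x ^ 2) / 2) = Real.exp (-(1/2 : ℝ) * x ^ 2) := by ring_nf

lemma integrable_pow_exp (n : ℕ) :
    Integrable fun x : ℝ => x ^ n * Real.exp (-(x ^ 2) / 2) := by
  have h := integrable_rpow_mul_exp_neg_mul_sq (b := (1/2:ℝ)) (by norm_num)
    (s := (n : ℝ)) (lt_of_lt_of_le (by norm_num) (Nat.cast_nonneg n))
  simp_rw [Real.rpow_natCast] at h
  refine h.congr (Filter.Eventually.of_forall fun x => ?_)
  simp only []
  rw [exp_eq x]

lemma integrable_pow_Mw (n : ℕ) : Integrable fun v : ℝ => v ^ n * Mw v := by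
  have := (integrable_pow_exp n).const_mul ((Real.sqrt (2 * Real.pi))⁻¹)
  refine this.congr (Filter.Eventually.of_forall fun v => ?_)
  unfold Mw; ring

lemma integrable_Mw : Integrable Mw := by
  have := integrable_pow_Mw 0
  simpa using this

lemma integral_exp_gauss : ∫ x : ℝ, Real.exp (-(x ^ 2) / 2) = Real.sqrt (2 * Real.pi) := by
  simp_rw [exp_eq]
  rw [integral_gaussian]
  rw [show Real.pi / (1/2:ℝ) = 2 * Real.pi from by ring]

lemma integral_Mw : ∫ v : ℝ, Mw v = 1 := by
  unfold Mw
  rw [MeasureTheory.integral_const_mul, integral_exp_gauss,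
    inv_mul_cancel₀ (by positivity : Real.sqrt (2 * Real.pi) ≠ 0)]

lemma integral_sq_exp_gauss :
    ∫ x : ℝ, x ^ 2 * Real.exp (-(x ^ 2) / 2) = Real.sqrt (2 * Real.pi) := by
  have hderiv : ∀ x : ℝ, HasDerivAt (fun x : ℝ => x * Real.exp (-(x ^ 2) / 2))
      (Real.exp (-(x ^ 2) / 2) - x ^ 2 * Real.exp (-(x ^ 2) / 2)) x := by
    intro x
    have h1 : HasDerivAt (fun x : ℝ => -(x ^ 2) / 2) (-x) x := by
      have := ((hasDerivAt_pow 2 x).neg).div_const 2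
      refine this.congr_deriv ?_
      push_cast; ring
    have h2 := h1.exp
    have h3 := (hasDerivAt_id x).mul h2
    refine h3.congr_deriv ?_
    simp only [id_eq]
    ring
  have hint : Integrable fun x : ℝ =>
      Real.exp (-(x ^ 2) / 2) - x ^ 2 * Real.exp (-(x ^ 2) / 2) := by
    have h0 := integrable_pow_exp 0
    simp only [pow_zero, one_mul] at h0
    exact h0.sub (integrable_pow_exp 2)
  have hf : Integrable fun x : ℝ => x * Real.exp (-(x ^ 2) / 2) := by
    have := integrable_pow_exp 1
    simpa using this
  have hz := integral_eq_zero_of_hasDerivAt_of_integrable hderiv hint hf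
  rw [MeasureTheory.integral_sub (by simpa using integrable_pow_exp 0) (integrable_pow_exp 2)]
    at hz
  have := integral_exp_gauss
  linarith

lemma integral_sq_Mw : ∫ v : ℝ, v ^ 2 * Mw v = 1 := by
  unfold Mw
  have h : (fun v : ℝ => v ^ 2 * ((Real.sqrt (2 * Real.pi))⁻¹ * Real.exp (-(v ^ 2) / 2)))
      = fun v => (Real.sqrt (2 * Real.pi))⁻¹ * (v ^ 2 * Real.exp (-(v ^ 2) / 2)) := by
    funext v; ring
  rw [h, MeasureTheory.integral_const_mul, integral_sq_exp_gauss,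
    inv_mul_cancel₀ (by positivity : Real.sqrt (2 * Real.pi) ≠ 0)]

/-- **Asymptotic-preserving property: the formal `ε → 0` limit scheme is the LDG scheme
for the heat equation.** With `r*(x,v) = ρⁿ(x)M(v)` and `j*(x,v) = −(vM(v)/λ)g*(x)`,
if `(j*(·,v), η) = −(v/λ)L⁺(r*(·,v), η)` for all `v, η` and
`((r^{n+1}(·,v) − r*(·,v))/Δt, ξ) + v·L⁻(j*(·,v), ξ) = 0` for all `v, ξ`, then
`ρ^{n+1}(x) = ∫_ℝ r^{n+1}(x,v) dv` belongs to `V_h^k` and `(g*, ρ^{n+1})` satisfies the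
LDG scheme for the heat equation `∂_t ρ = D ∂_{xx} ρ` with
`D = ∫_ℝ v²M(v)/λ dv = 1/λ`: `(g*, η) = L⁺(ρⁿ, η)` and
`((ρ^{n+1} − ρⁿ)/Δt, ξ) = D·L⁻(g*, ξ)` for all test functions in `V_h^k`. -/
theorem asymptotic_preserving_limit (k Nv N : ℕ) (hN : 0 < N)
    (lam Δt : ℝ) (hlam : 0 < lam) (hΔt : 0 < Δt)
    (rhon gs : PW N) (hrhon : degLE k rhon) (hgs : degLE k gs)
    (c : Ansatz N Nv) (hc : AdegLE k c)
    -- (i): (j*(·,v), η) = −(v/λ) L⁺(r*(·,v), η) for every v and every η ∈ V_h^k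
    (hi : ∀ v : ℝ, ∀ η : PW N, degLE k η →
      inner2 (fun i => Polynomial.C (-(v * Mw v) / lam) * gs i) η
        = -(v / lam) * Lplus (fun i => Polynomial.C (Mw v) * rhon i) η)
    -- (ii): ((r^{n+1}(·,v) − r*(·,v))/Δt, ξ) + v·L⁻(j*(·,v), ξ) = 0 for every v, ξ ∈ V_h^k
    (hii : ∀ v : ℝ, ∀ ξ : PW N, degLE k ξ →
      Δt⁻¹ * inner2 (fun i => aAt c v i - Polynomial.C (Mw v) * rhon i) ξ
        + v * Lminus (fun i => Polynomial.C (-(v * Mw v) / lam) * gs i) ξ = 0) :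
    (∀ η : PW N, degLE k η → inner2 gs η = Lplus rhon η) ∧
    ∃ q : PW N, degLE k q ∧
      (∀ (i : Fin N) (x : ℝ), (q i).eval x = ∫ v : ℝ, (aAt c v i).eval x) ∧
      (∫ v : ℝ, v ^ 2 * Mw v / lam) = 1 / lam ∧
      (∀ ξ : PW N, degLE k ξ →
        Δt⁻¹ * inner2 (fun i => q i - rhon i) ξ
          = (∫ v : ℝ, v ^ 2 * Mw v / lam) * Lminus gs ξ) := by
  have hl : lam ≠ 0 := hlam.ne'
  have hD : (∫ v : ℝ, v ^ 2 * Mw v / lam) = 1 / lam := by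
    simp_rw [div_eq_mul_inv]
    rw [MeasureTheory.integral_mul_const, integral_sq_Mw, one_mul]
  constructor
  · intro η hη
    have h := hi 1 η hη
    rw [inner2_smul, Lplus_smul] at h
    have hM : Mw 1 ≠ 0 := (Mw_pos 1).ne'
    have hc0 : (-(1 * Mw 1) / lam) ≠ 0 := by
      refine div_ne_zero ?_ hl
      simpa using hM
    have h4 : -(1 / lam) * (Mw 1 * Lplus rhon η) = (-(1 * Mw 1) / lam) * Lplus rhon η := by
      ring
    rw [h4] at h
    exact mul_left_cancel₀ hc0 h
  · set m : Fin (Nv + 1) → ℝ := fun ℓ => ∫ v : ℝ, v ^ (ℓ : ℕ) * Mw v with hm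
    refine ⟨fun i => ∑ ℓ : Fin (Nv + 1), Polynomial.C (m ℓ) * c ℓ i, ?_, ?_, hD, ?_⟩
    · intro i
      refine (Polynomial.degree_sum_le _ _).trans (Finset.sup_le fun ℓ _ => ?_)
      rw [← smul_eq_C_mul]
      exact (Polynomial.degree_smul_le _ _).trans (hc ℓ i)
    · intro i x
      have hfun : (fun v : ℝ => (aAt c v i).eval x)
          = fun v : ℝ => ∑ ℓ : Fin (Nv + 1), (v ^ (ℓ : ℕ) * Mw v) * (c ℓ i).eval x := by
        funext v
        simp only [aAt, eval_mul, eval_C, eval_finset_sum, Finset.mul_sum]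
        exact Finset.sum_congr rfl fun ℓ _ => by ring
      have hswap : (∫ v : ℝ, ∑ ℓ : Fin (Nv + 1), (v ^ (ℓ : ℕ) * Mw v) * (c ℓ i).eval x)
          = ∑ ℓ : Fin (Nv + 1), ∫ v : ℝ, (v ^ (ℓ : ℕ) * Mw v) * (c ℓ i).eval x :=
        MeasureTheory.integral_finset_sum _
          (fun ℓ _ => (integrable_pow_Mw (ℓ : ℕ)).mul_const _)
      rw [hfun, hswap]
      simp only [MeasureTheory.integral_mul_const]
      simp [eval_finset_sum, hm]
    · intro ξ hξ
      set A : Fin (Nv + 1) → ℝ := fun ℓ => inner2 (c ℓ) ξ with hA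
      set B := inner2 rhon ξ with hB
      set L := Lminus gs ξ with hL
      have key : ∀ v : ℝ,
          Δt⁻¹ * (Mw v * (∑ ℓ : Fin (Nv + 1), v ^ (ℓ : ℕ) * A ℓ) - Mw v * B)
            = (v ^ 2 * Mw v / lam) * L := by
        intro v
        have h := hii v ξ hξ
        rw [inner2_sub (aAt c v) (fun i => Polynomial.C (Mw v) * rhon i) ξ,
          inner2_aAt, inner2_smul, Lminus_smul] at h
        have h2 : v * (-(v * Mw v) / lam * L) = -((v ^ 2 * Mw v / lam) * L) := by ring
        linarith [h]
      have hIsum : Integrable (fun v : ℝ =>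
          ∑ ℓ : Fin (Nv + 1), (v ^ (ℓ : ℕ) * Mw v) * A ℓ) :=
        integrable_finset_sum _ (fun ℓ _ => (integrable_pow_Mw _).mul_const _)
      have hIB : Integrable (fun v : ℝ => Mw v * B) := integrable_Mw.mul_const _
      have hq : inner2 (fun i => (∑ ℓ : Fin (Nv + 1), Polynomial.C (m ℓ) * c ℓ i) - rhon i) ξ
          = (∑ ℓ : Fin (Nv + 1), m ℓ * A ℓ) - B := by
        rw [inner2_sub (fun i => ∑ ℓ : Fin (Nv + 1), Polynomial.C (m ℓ) * c ℓ i) rhon ξ]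
        congr 1
        trans (∑ ℓ : Fin (Nv + 1), inner2 (fun i => Polynomial.C (m ℓ) * c ℓ i) ξ)
        · exact inner2_sum _ _ _
        · exact Finset.sum_congr rfl fun ℓ _ => inner2_smul _ _ _
      have hInt : ∫ v : ℝ, Δt⁻¹ * (Mw v * (∑ ℓ : Fin (Nv + 1), v ^ (ℓ : ℕ) * A ℓ) - Mw v * B)
          = ∫ v : ℝ, (v ^ 2 * Mw v / lam) * L :=
        MeasureTheory.integral_congr_ae (Filter.Eventually.of_forall key)
      have hLHS : ∫ v : ℝ, Δt⁻¹ * (Mw v * (∑ ℓ : Fin (Nv + 1), v ^ (ℓ : ℕ) * A ℓ) - Mw v * B)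
          = Δt⁻¹ * ((∑ ℓ : Fin (Nv + 1), m ℓ * A ℓ) - B) := by
        have hfun : (fun v : ℝ =>
            Δt⁻¹ * (Mw v * (∑ ℓ : Fin (Nv + 1), v ^ (ℓ : ℕ) * A ℓ) - Mw v * B))
            = fun v : ℝ => Δt⁻¹ *
              ((∑ ℓ : Fin (Nv + 1), (v ^ (ℓ : ℕ) * Mw v) * A ℓ) - Mw v * B) := by
          funext v
          rw [Finset.mul_sum]
          congr 2
          exact Finset.sum_congr rfl fun ℓ _ => by ring
        have hswap2 : (∫ v : ℝ, ∑ ℓ : Fin (Nv + 1), (v ^ (ℓ : ℕ) * Mw v) * A ℓ)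
            = ∑ ℓ : Fin (Nv + 1), ∫ v : ℝ, (v ^ (ℓ : ℕ) * Mw v) * A ℓ :=
          MeasureTheory.integral_finset_sum _
            (fun ℓ _ => (integrable_pow_Mw (ℓ : ℕ)).mul_const _)
        rw [hfun, MeasureTheory.integral_const_mul, MeasureTheory.integral_sub hIsum hIB,
          hswap2]
        simp only [MeasureTheory.integral_mul_const]
        rw [integral_Mw, one_mul]
      have hRHS : ∫ v : ℝ, (v ^ 2 * Mw v / lam) * L
          = (∫ v : ℝ, v ^ 2 * Mw v / lam) * L := MeasureTheory.integral_mul_const _ _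
      rw [hq, ← hLHS, hInt, hRHS]


end APDG
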